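/- Area identity in diagonalizing Fourier variables. Let 𝓧 = (𝓧₁,𝓧₂): ℝ → ℝ² be continuously differentiable and 2π-periodic. For k ∈ ℤ define Ŷ₁(k) = (1/√2)(i·sgn(k)·𝓧̂₁(k) + 𝓧̂₂(k)) and Ŷ₂(k) = (1/√2)(𝓧̂₁(k) + i·sgn(k)·𝓧̂₂(k)). Then the series ∑_{k∈ℤ} |k|(|Ŷ₂(k)|² − |Ŷ₁(k)|²) converges absolutely and (1/2) ∫_{−π}^{π} (𝓧₁(θ)𝓧₂'(θ) − 𝓧₂(θ)𝓧₁'(θ)) dθ = π ∑_{k∈ℤ} |k| ( |Ŷ₂(k)|² − |Ŷ₁(k)|² ). In particular, if the curve 𝓧 encloses (signed) area π, then ∑_{k∈ℤ} |k|(|Ŷ₂(k)|² − |Ŷ₁(k)|²) = 1. -/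

import Mathlib

open Real intervalIntegral

/-- The `k`-th Fourier coefficient `f̂(k) = (1/(2π))∫_{−π}^{π} f(θ)e^{−ikθ}dθ`
of a (2π-periodic) real-valued function. -/
noncomputable def fourierCoeff' (f : ℝ → ℝ) (k : ℤ) : ℂ :=
  (1 / (2 * π) : ℂ) *
    ∫ θ in (-π)..π, (f θ : ℂ) * Complex.exp (-Complex.I * (k : ℂ) * (θ : ℂ))

section Aux

open MeasureTheory ContinuousMap Complex
open scoped ComplexConjugate

local notation "⟪" x ", " y "⟫" => @inner ℂ _ _ x y

/-- The ad-hoc Fourier coefficient agrees with `fourierCoeffOn` over `[-π, -π + 2π]`. -/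
lemma fourierCoeff'_eq [hF : Fact ((0:ℝ) < 2*π)] (X : ℝ → ℝ) (k : ℤ) :
    fourierCoeff' X k
      = fourierCoeffOn (lt_add_of_pos_right (-π) hF.out) (fun θ => (X θ : ℂ)) k := by
  rw [fourierCoeffOn_eq_integral]
  simp_rw [fourier_coe_apply]
  rw [show (-π) + 2*π = π from by ring, show (π - -π) = 2*π from by ring]
  rw [fourierCoeff', Complex.real_smul]
  congr 1
  · push_cast; ring
  · refine intervalIntegral.integral_congr fun x _ => ?_
    rw [smul_eq_mul, mul_comm]
    congr 1
    have hπ : (π:ℂ) ≠ 0 := Complex.ofReal_ne_zero.mpr Real.pi_ne_zero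
    push_cast
    congr 1
    field_simp

/-- Fourier coefficients of the derivative of a `C¹` `2π`-periodic function. -/
lemma deriv_coeff [hF : Fact ((0:ℝ) < 2*π)] (X : ℝ → ℝ) (hX : ContDiff ℝ 1 X)
    (hper : ∀ θ : ℝ, X (θ + 2 * π) = X θ) (k : ℤ) :
    fourierCoeffOn (lt_add_of_pos_right (-π) hF.out) (fun θ => ((deriv X θ : ℝ) : ℂ)) k
      = Complex.I * k * fourierCoeffOn (lt_add_of_pos_right (-π) hF.out) (fun θ => (X θ : ℂ)) k := by
  have hab := lt_add_of_pos_right (-π : ℝ) hF.out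
  have hcd : Continuous (deriv X) := hX.continuous_deriv le_rfl
  have hint : IntervalIntegrable (fun θ => ((deriv X θ : ℝ) : ℂ)) MeasureTheory.volume (-π) (-π + 2*π) :=
    (Complex.continuous_ofReal.comp hcd).intervalIntegrable _ _
  rcases eq_or_ne k 0 with rfl | hk
  · rw [fourierCoeffOn_eq_integral]
    simp only [neg_zero, fourier_zero, one_smul, Int.cast_zero, mul_zero, zero_mul]
    rw [intervalIntegral.integral_ofReal]
    rw [intervalIntegral.integral_deriv_eq_sub (fun x _ => (hX.differentiable one_ne_zero).differentiableAt)
      (hcd.intervalIntegrable _ _)]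
    rw [hper (-π), sub_self]
    simp
  · have hda : ∀ x ∈ Set.uIcc (-π) (-π + 2*π), HasDerivAt (fun θ => (X θ : ℂ)) ((deriv X x : ℝ) : ℂ) x :=
      fun x _ => ((hX.differentiable one_ne_zero) x).hasDerivAt.ofReal_comp
    have h := fourierCoeffOn_of_hasDerivAt hab hk hda hint
    rw [hper (-π)] at h
    rw [sub_self, mul_zero, zero_sub] at h
    rw [h]
    have h2 : ((-π + 2*π : ℝ) : ℂ) - ((-π:ℝ):ℂ) = 2*π := by push_cast; ring
    rw [h2]
    have hπ : (π:ℂ) ≠ 0 := Complex.ofReal_ne_zero.mpr Real.pi_ne_zero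
    have hkc : (k:ℂ) ≠ 0 := Int.cast_ne_zero.mpr hk
    field_simp

/-- The key pointwise algebraic identity. -/
lemma key_alg (k : ℤ) (hk : k ≠ 0) (a b : ℂ) :
    (|k| : ℝ) * (‖(1 / Real.sqrt 2 : ℝ) •
        (a + Complex.I * ((Int.sign k : ℤ) : ℂ) * b)‖ ^ 2
      - ‖(1 / Real.sqrt 2 : ℝ) •
        (Complex.I * ((Int.sign k : ℤ) : ℂ) * a + b)‖ ^ 2)
    = ((starRingEnd ℂ) a * (Complex.I * k * b)
        - (starRingEnd ℂ) b * (Complex.I * k * a)).re := by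
  have h2 : Real.sqrt 2 ^ 2 = 2 := Real.sq_sqrt (by norm_num)
  have h2' : Real.sqrt 2 ≠ 0 := by positivity
  rcases lt_or_gt_of_ne hk with h | h
  · rw [Int.sign_eq_neg_one_of_neg h, abs_of_neg (by exact_mod_cast h : (k:ℝ) < 0)]
    rw [Complex.sq_norm, Complex.sq_norm]
    simp only [Complex.real_smul, Complex.normSq_apply, Complex.add_re, Complex.add_im,
      Complex.mul_re, Complex.mul_im, Complex.I_re, Complex.I_im, Complex.intCast_re,
      Complex.intCast_im, Complex.sub_re, Complex.conj_re, Complex.conj_im,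
      Complex.ofReal_re, Complex.ofReal_im, Int.cast_neg, Int.cast_one,
      Complex.neg_re, Complex.neg_im, Complex.one_re, Complex.one_im]
    field_simp
    rw [h2]
    ring
  · rw [Int.sign_eq_one_of_pos h, abs_of_pos (by exact_mod_cast h : (0:ℝ) < (k:ℝ))]
    rw [Complex.sq_norm, Complex.sq_norm]
    simp only [Complex.real_smul, Complex.normSq_apply, Complex.add_re, Complex.add_im,
      Complex.mul_re, Complex.mul_im, Complex.I_re, Complex.I_im, Complex.intCast_re,
      Complex.intCast_im, Complex.sub_re, Complex.conj_re, Complex.conj_im,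
      Complex.ofReal_re, Complex.ofReal_im, Int.cast_neg, Int.cast_one,
      Complex.neg_re, Complex.neg_im, Complex.one_re, Complex.one_im]
    field_simp
    rw [h2]
    ring

/-- Parseval identity for a pair of continuous `2π`-periodic real functions. -/
lemma parseval_pair [hF : Fact ((0:ℝ) < 2*π)] (u v : ℝ → ℝ)
    (hu : Continuous u) (hv : Continuous v)
    (hpu : ∀ θ : ℝ, u (θ + 2 * π) = u θ) (hpv : ∀ θ : ℝ, v (θ + 2 * π) = v θ) :
    HasSum (fun k : ℤ =>
        conj (fourierCoeffOn (lt_add_of_pos_right (-π) hF.out) (fun θ => (u θ : ℂ)) k)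
          * fourierCoeffOn (lt_add_of_pos_right (-π) hF.out) (fun θ => (v θ : ℂ)) k)
      ((((1 / (2*π)) * ∫ θ in (-π : ℝ)..(-π + 2*π), u θ * v θ : ℝ)) : ℂ) := by
  set T : ℝ := 2*π with hT
  have hu' : Continuous fun θ : ℝ => (u θ : ℂ) := Complex.continuous_ofReal.comp hu
  have hv' : Continuous fun θ : ℝ => (v θ : ℂ) := Complex.continuous_ofReal.comp hv
  have hcu : Continuous (AddCircle.liftIco T (-π) fun θ => (u θ : ℂ)) :=
    AddCircle.liftIco_continuous (by simp [hpu (-π)]) hu'.continuousOn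
  have hcv : Continuous (AddCircle.liftIco T (-π) fun θ => (v θ : ℂ)) :=
    AddCircle.liftIco_continuous (by simp [hpv (-π)]) hv'.continuousOn
  set fcU : C(AddCircle T, ℂ) := ⟨_, hcu⟩
  set fcV : C(AddCircle T, ℂ) := ⟨_, hcv⟩
  set F := ContinuousMap.toLp (E := ℂ) 2 AddCircle.haarAddCircle ℂ fcU with hF'
  set G := ContinuousMap.toLp (E := ℂ) 2 AddCircle.haarAddCircle ℂ fcV with hG'
  have H := HilbertBasis.hasSum_inner_mul_inner fourierBasis F G
  have hrepr : ∀ (W : Lp ℂ 2 (AddCircle.haarAddCircle (T := T))) (k : ℤ),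
      ⟪fourierBasis k, W⟫ = fourierCoeff (W : AddCircle T → ℂ) k := by
    intro W k
    rw [← fourierBasis_repr, HilbertBasis.repr_apply_apply]
  have hterm : ∀ k : ℤ, ⟪F, fourierBasis k⟫ * ⟪fourierBasis k, G⟫
      = conj (fourierCoeffOn (lt_add_of_pos_right (-π) hF.out) (fun θ => (u θ : ℂ)) k)
          * fourierCoeffOn (lt_add_of_pos_right (-π) hF.out) (fun θ => (v θ : ℂ)) k := by
    intro k
    rw [← inner_conj_symm, hrepr F k, hrepr G k]
    rw [hF', hG', fourierCoeff_toLp, fourierCoeff_toLp]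
    rw [show (⇑fcU : AddCircle T → ℂ) = AddCircle.liftIco T (-π) fun θ => ((u θ : ℝ) : ℂ) from rfl,
      show (⇑fcV : AddCircle T → ℂ) = AddCircle.liftIco T (-π) fun θ => ((v θ : ℝ) : ℂ) from rfl]
    rw [fourierCoeff_liftIco_eq, fourierCoeff_liftIco_eq]
  have hsum : ⟪F, G⟫ = ((((1 / (2*π)) * ∫ θ in (-π : ℝ)..(-π + 2*π), u θ * v θ : ℝ)) : ℂ) := by
    rw [MeasureTheory.L2.inner_def]
    have hae : ∀ᵐ x ∂(AddCircle.haarAddCircle : MeasureTheory.Measure (AddCircle T)),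
        ⟪F x, G x⟫ = (AddCircle.liftIco T (-π) fun θ => ((u θ * v θ : ℝ) : ℂ)) x := by
      filter_upwards [ContinuousMap.coeFn_toLp (p := 2)
          (μ := (AddCircle.haarAddCircle : MeasureTheory.Measure (AddCircle T))) (𝕜 := ℂ) fcU,
        ContinuousMap.coeFn_toLp (p := 2)
          (μ := (AddCircle.haarAddCircle : MeasureTheory.Measure (AddCircle T))) (𝕜 := ℂ) fcV] with x h1 h2
      rw [← hF'] at h1; rw [← hG'] at h2
      rw [h1, h2]
      rw [RCLike.inner_apply']
      show conj (fcU x) * fcV x = _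
      show conj ((AddCircle.liftIco T (-π) fun θ => ((u θ : ℝ) : ℂ)) x) * _ = _
      simp only [AddCircle.liftIco, Function.comp_apply, Set.restrict_apply]
      push_cast
      rw [Complex.conj_ofReal]
      rfl
    rw [MeasureTheory.integral_congr_ae hae]
    have : ∫ x, (AddCircle.liftIco T (-π) fun θ => ((u θ * v θ : ℝ) : ℂ)) x
          ∂(AddCircle.haarAddCircle : MeasureTheory.Measure (AddCircle T))
        = fourierCoeff (AddCircle.liftIco T (-π) fun θ => ((u θ * v θ : ℝ) : ℂ)) 0 := by
      rw [fourierCoeff]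
      congr 1
      funext t
      rw [neg_zero, fourier_zero, one_smul]
    rw [this, fourierCoeff_liftIco_eq, fourierCoeffOn_eq_integral]
    simp only [neg_zero, fourier_zero, one_smul]
    rw [intervalIntegral.integral_ofReal, Complex.real_smul]
    push_cast
    simp only [hT]
    push_cast
    rw [show (-(π:ℂ) + 2*π - -π : ℂ) = 2*π from by ring]
  rw [← hsum]
  exact H.congr_fun fun k => (hterm k).symm

end Aux

/-- Area identity in diagonalizing Fourier variables: for a `C¹` `2π`-periodic
curve `𝓧 = (𝓧₁,𝓧₂)`, with `Ŷ₁(k) = (1/√2)(i·sgn(k)𝓧̂₁(k) + 𝓧̂₂(k))` and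
`Ŷ₂(k) = (1/√2)(𝓧̂₁(k) + i·sgn(k)𝓧̂₂(k))`, the series
`∑_{k∈ℤ} |k|(|Ŷ₂(k)|² − |Ŷ₁(k)|²)` converges absolutely and
`(1/2)∫_{−π}^{π}(𝓧₁𝓧₂' − 𝓧₂𝓧₁')dθ = π∑_{k∈ℤ}|k|(|Ŷ₂(k)|² − |Ŷ₁(k)|²)`; in
particular if the enclosed signed area is `π` then the sum equals `1`. -/
theorem area_identity_fourier (X1 X2 : ℝ → ℝ)
    (hX1 : ContDiff ℝ 1 X1) (hX2 : ContDiff ℝ 1 X2)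
    (hper1 : ∀ θ : ℝ, X1 (θ + 2 * π) = X1 θ) (hper2 : ∀ θ : ℝ, X2 (θ + 2 * π) = X2 θ)
    (Y1 Y2 : ℤ → ℂ)
    (hY1 : ∀ k, Y1 k = (1 / Real.sqrt 2 : ℝ) •
      (Complex.I * ((Int.sign k : ℤ) : ℂ) * fourierCoeff' X1 k + fourierCoeff' X2 k))
    (hY2 : ∀ k, Y2 k = (1 / Real.sqrt 2 : ℝ) •
      (fourierCoeff' X1 k + Complex.I * ((Int.sign k : ℤ) : ℂ) * fourierCoeff' X2 k)) :
    Summable (fun k : ℤ =>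
      (|k| : ℝ) * (‖Y2 k‖ ^ 2 - ‖Y1 k‖ ^ 2)) ∧
    (1 / 2) * (∫ θ in (-π)..π, (X1 θ * deriv X2 θ - X2 θ * deriv X1 θ)) =
      π * ∑' k : ℤ, (|k| : ℝ) * (‖Y2 k‖ ^ 2 - ‖Y1 k‖ ^ 2) ∧
    ((1 / 2) * (∫ θ in (-π)..π, (X1 θ * deriv X2 θ - X2 θ * deriv X1 θ)) = π →
      ∑' k : ℤ, (|k| : ℝ) * (‖Y2 k‖ ^ 2 - ‖Y1 k‖ ^ 2) = 1) := by
  haveI hF : Fact ((0:ℝ) < 2*π) := ⟨by positivity⟩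
  have hd1 : Continuous (deriv X1) := hX1.continuous_deriv le_rfl
  have hd2 : Continuous (deriv X2) := hX2.continuous_deriv le_rfl
  have hpd1 : ∀ θ : ℝ, deriv X1 (θ + 2*π) = deriv X1 θ := by
    intro θ
    conv_rhs => rw [show X1 = fun x => X1 (x + 2*π) from funext fun x => (hper1 x).symm]
    rw [deriv_comp_add_const]
  have hpd2 : ∀ θ : ℝ, deriv X2 (θ + 2*π) = deriv X2 θ := by
    intro θ
    conv_rhs => rw [show X2 = fun x => X2 (x + 2*π) from funext fun x => (hper2 x).symm]
    rw [deriv_comp_add_const]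
  have P1 := parseval_pair X1 (deriv X2) hX1.continuous hd2 hper1 hpd2
  have P2 := parseval_pair X2 (deriv X1) hX2.continuous hd1 hper2 hpd1
  have hsub := (P1.sub P2).mapL Complex.reCLM
  have hfun : ∀ k : ℤ,
      (|k| : ℝ) * (‖Y2 k‖ ^ 2 - ‖Y1 k‖ ^ 2)
      = Complex.reCLM
        ((starRingEnd ℂ) (fourierCoeffOn (lt_add_of_pos_right (-π) hF.out)
            (fun θ => (X1 θ : ℂ)) k) *
          fourierCoeffOn (lt_add_of_pos_right (-π) hF.out) (fun θ => ((deriv X2 θ : ℝ) : ℂ)) k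
        - (starRingEnd ℂ) (fourierCoeffOn (lt_add_of_pos_right (-π) hF.out)
            (fun θ => (X2 θ : ℂ)) k) *
          fourierCoeffOn (lt_add_of_pos_right (-π) hF.out) (fun θ => ((deriv X1 θ : ℝ) : ℂ)) k) := by
    intro k
    rw [deriv_coeff X1 hX1 hper1 k, deriv_coeff X2 hX2 hper2 k]
    rw [hY1 k, hY2 k, fourierCoeff'_eq X1 k, fourierCoeff'_eq X2 k, Complex.reCLM_apply]
    rcases eq_or_ne k 0 with rfl | hk
    · simp
    · exact key_alg k hk _ _
  have hre := hsub.congr_fun hfun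
  have hval : Complex.reCLM
      (((((1 / (2*π)) * ∫ θ in (-π : ℝ)..(-π + 2*π), X1 θ * deriv X2 θ : ℝ)) : ℂ)
        - ((((1 / (2*π)) * ∫ θ in (-π : ℝ)..(-π + 2*π), X2 θ * deriv X1 θ : ℝ)) : ℂ))
      = (1 / (2*π)) * ((∫ θ in (-π : ℝ)..(-π + 2*π), X1 θ * deriv X2 θ)
          - (∫ θ in (-π : ℝ)..(-π + 2*π), X2 θ * deriv X1 θ)) := by
    rw [Complex.reCLM_apply, Complex.sub_re, Complex.ofReal_re, Complex.ofReal_re]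
    ring
  rw [hval] at hre
  have hint : (∫ θ in (-π : ℝ)..π, (X1 θ * deriv X2 θ - X2 θ * deriv X1 θ))
      = (∫ θ in (-π : ℝ)..(-π + 2*π), X1 θ * deriv X2 θ)
        - (∫ θ in (-π : ℝ)..(-π + 2*π), X2 θ * deriv X1 θ) := by
    rw [show (-π + 2*π : ℝ) = π from by ring]
    exact intervalIntegral.integral_sub
      ((hX1.continuous.mul hd2).intervalIntegrable _ _)
      ((hX2.continuous.mul hd1).intervalIntegrable _ _)
  have hmain : (1 / 2) * (∫ θ in (-π : ℝ)..π, (X1 θ * deriv X2 θ - X2 θ * deriv X1 θ))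
      = π * ∑' k : ℤ, (|k| : ℝ) * (‖Y2 k‖ ^ 2 - ‖Y1 k‖ ^ 2) := by
    rw [hre.tsum_eq, hint]
    have hπ : (π:ℝ) ≠ 0 := Real.pi_ne_zero
    field_simp
  refine ⟨hre.summable, hmain, fun h => ?_⟩
  have : π * ∑' k : ℤ, (|k| : ℝ) * (‖Y2 k‖ ^ 2 - ‖Y1 k‖ ^ 2) = π * 1 := by
    rw [← hmain, h, mul_one]
  exact mul_left_cancel₀ Real.pi_ne_zero this
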